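/- Let G be a graph with vertex set {v_1,...,v_n} and let D_G be its extended double cover (bipartite graph on X ∪ Y with x_i adjacent to y_j iff i = j or v_iv_j ∈ E(G)). Then for every k ≥ 1, G is k-CFCN-choosable (full coloring version) if and only if D_G is k-CFON-choosable (full coloring version). -/

import Mathlib

/-- `G` is `k`-CFON-choosable (full coloring version). -/
def CFONchoosable {V : Type*} (G : SimpleGraph V) (k : ℕ) : Prop :=
  ∀ L : V → Finset ℕ, (∀ v, (L v).card = k) →
    ∃ c : V → ℕ, (∀ v, c v ∈ L v) ∧
      ∀ v : V, ∃ a, ∃! u, G.Adj v u ∧ c u = a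

/-- `G` is `k`-CFCN-choosable (full coloring version). -/
def CFCNchoosable {V : Type*} (G : SimpleGraph V) (k : ℕ) : Prop :=
  ∀ L : V → Finset ℕ, (∀ v, (L v).card = k) →
    ∃ c : V → ℕ, (∀ v, c v ∈ L v) ∧
      ∀ v : V, ∃ a, ∃! u, (G.Adj v u ∨ u = v) ∧ c u = a

/-- The extended double cover of `G`. -/
def extDoubleCover {V : Type*} (G : SimpleGraph V) : SimpleGraph (V ⊕ V) where
  Adj x y := match x, y with
    | Sum.inl i, Sum.inr j => i = j ∨ G.Adj i j
    | Sum.inr j, Sum.inl i => i = j ∨ G.Adj i j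
    | _, _ => False
  symm := ⟨by rintro (i | i) (j | j) h <;> exact h⟩
  loopless := ⟨by rintro (i | i) h <;> exact h⟩

/-- `G` is `k`-CFCN-choosable iff its extended double cover is
`k`-CFON-choosable (full coloring versions). -/
theorem stmt_12 {V : Type*} (G : SimpleGraph V) (k : ℕ) (hk : 1 ≤ k) :
    CFCNchoosable G k ↔ CFONchoosable (extDoubleCover G) k := by
  have hadjL : ∀ (i : V) (w : V ⊕ V),
      (extDoubleCover G).Adj (Sum.inl i) w ↔ ∃ j, w = Sum.inr j ∧ (G.Adj i j ∨ j = i) := by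
    rintro i (j | j)
    · simp [extDoubleCover]
    · constructor
      · intro h
        rcases h with h | h
        · exact ⟨j, rfl, Or.inr h.symm⟩
        · exact ⟨j, rfl, Or.inl h⟩
      · rintro ⟨j', hj', h⟩
        cases hj'
        rcases h with h | h
        · exact Or.inr h
        · exact Or.inl h.symm
  have hadjR : ∀ (i : V) (w : V ⊕ V),
      (extDoubleCover G).Adj (Sum.inr i) w ↔ ∃ j, w = Sum.inl j ∧ (G.Adj i j ∨ j = i) := by
    rintro i (j | j)
    · constructor
      · intro h
        rcases h with h | h
        · exact ⟨j, rfl, Or.inr h⟩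
        · exact ⟨j, rfl, Or.inl h.symm⟩
      · rintro ⟨j', hj', h⟩
        cases hj'
        rcases h with h | h
        · exact Or.inr h.symm
        · exact Or.inl h
    · simp [extDoubleCover]
  constructor
  · intro h L hL
    obtain ⟨c1, hc1m, hc1⟩ := h (fun v => L (Sum.inl v)) (fun v => hL _)
    obtain ⟨c2, hc2m, hc2⟩ := h (fun v => L (Sum.inr v)) (fun v => hL _)
    refine ⟨Sum.elim c1 c2, ?_, ?_⟩
    · rintro (v | v)
      · exact hc1m v
      · exact hc2m v
    · rintro (v | v)
      · obtain ⟨a, u, ⟨hu1, hu2⟩, huniq⟩ := hc2 v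
        refine ⟨a, Sum.inr u, ⟨(hadjL v (Sum.inr u)).2 ⟨u, rfl, ?_⟩, hu2⟩, ?_⟩
        · rcases hu1 with h | h
          · exact Or.inl h
          · exact Or.inr h
        · rintro w ⟨hw1, hw2⟩
          obtain ⟨j, rfl, hj⟩ := (hadjL v w).1 hw1
          have := huniq j ⟨by tauto, hw2⟩
          exact congrArg Sum.inr this
      · obtain ⟨a, u, ⟨hu1, hu2⟩, huniq⟩ := hc1 v
        refine ⟨a, Sum.inl u, ⟨(hadjR v (Sum.inl u)).2 ⟨u, rfl, ?_⟩, hu2⟩, ?_⟩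
        · rcases hu1 with h | h
          · exact Or.inl h
          · exact Or.inr h
        · rintro w ⟨hw1, hw2⟩
          obtain ⟨j, rfl, hj⟩ := (hadjR v w).1 hw1
          have := huniq j ⟨by tauto, hw2⟩
          exact congrArg Sum.inl this
  · intro h L hL
    obtain ⟨c, hcm, hc⟩ := h (fun w => L (Sum.elim id id w)) (fun w => hL _)
    refine ⟨fun v => c (Sum.inr v), fun v => hcm (Sum.inr v), ?_⟩
    intro v
    obtain ⟨a, u, ⟨hu1, hu2⟩, huniq⟩ := hc (Sum.inl v)
    obtain ⟨j, rfl, hj⟩ := (hadjL v u).1 hu1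
    refine ⟨a, j, ⟨hj, hu2⟩, ?_⟩
    intro j' ⟨h1, h2⟩
    have := huniq (Sum.inr j') ⟨(hadjL v (Sum.inr j')).2 ⟨j', rfl, h1⟩, h2⟩
    exact Sum.inr.inj this
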